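/- Fix Δ_s, Δ_d > 0 with Δ = Δ_s + Δ_d + Δ_s Δ_d (equivalently (1+Δ_s)(1+Δ_d) = 1+Δ), and fix σ_s², σ_d² > 0. Suppose γ_s σ_s² = γ_d σ_d² = λ for some λ > 0. Let X be exponential with rate 1/(γ_s σ_s²) and Y exponential with rate 1/(γ_d σ_d²), independent. Then for every z > 0, P(X + Y ≥ Δz, X ≥ Δ_s z, Y ≥ Δ_d z) = (1 + Δ_s Δ_d z/λ)·exp(-Δ z/λ). -/

import Mathlib

open MeasureTheory Real

private lemma expInt (lam : ℝ) (hlam : 0 < lam) (m : ℝ) :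
    ∫ y in Set.Ioi m, (1 / lam) * Real.exp (-y / lam) = Real.exp (-m / lam) := by
  have h : ∀ y : ℝ, -y / lam = -(1 / lam * y) := fun y => by ring
  simp_rw [h]
  rw [MeasureTheory.integral_const_mul,
    integral_comp_mul_left_Ioi (fun t => Real.exp (-t)) m
      (by positivity : (0:ℝ) < 1 / lam), integral_exp_neg_Ioi, smul_eq_mul]
  field_simp

private lemma expIntegrable (lam : ℝ) (hlam : 0 < lam) (m : ℝ) :
    IntegrableOn (fun y : ℝ => (1 / lam) * Real.exp (-y / lam)) (Set.Ioi m) := by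
  have h : ∀ y : ℝ, -y / lam = -(1 / lam) * y := fun y => by ring
  simp_rw [h]
  exact (exp_neg_integrableOn_Ioi m (by positivity)).const_mul _

set_option maxHeartbeats 1000000 in
/-- Relay decoding success probability in the degenerate case of equal mean received SNRs
`γs σs² = γd σd² = λ`: `P(X+Y ≥ Δz, X ≥ Δs z, Y ≥ Δd z) = (1 + Δs Δd z/λ) e^{-Δz/λ}`. -/
theorem stmt_5 (Δs Δd Δ γs γd σs σd lam z : ℝ)
    (hΔs : 0 < Δs) (hΔd : 0 < Δd) (hΔ : Δ = Δs + Δd + Δs * Δd)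
    (hσs : 0 < σs) (hσd : 0 < σd) (hlam : 0 < lam)
    (hs : γs * σs = lam) (hd : γd * σd = lam) (hz : 0 < z) :
    (∫ x in Set.Ioi (0:ℝ), ∫ y in Set.Ioi (0:ℝ),
        (if Δ * z ≤ x + y ∧ Δs * z ≤ x ∧ Δd * z ≤ y then (1:ℝ) else 0) *
          ((1 / lam) * Real.exp (-x / lam)) * ((1 / lam) * Real.exp (-y / lam)))
      = (1 + Δs * Δd * z / lam) * Real.exp (-(Δ * z) / lam) := by
  set a := Δs * z with ha_def
  set b := Δd * z with hb_def
  set c := Δ * z with hc_def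
  set d := c - b with hd_def
  have ha0 : 0 < a := by positivity
  have hb0 : 0 < b := by positivity
  have hda : d - a = Δs * Δd * z := by
    simp only [hd_def, hc_def, ha_def, hb_def, hΔ]; ring
  have had : a ≤ d := by nlinarith
  -- the inner integral
  have inner : ∀ x : ℝ,
      (∫ y in Set.Ioi (0:ℝ),
        (if c ≤ x + y ∧ a ≤ x ∧ b ≤ y then (1:ℝ) else 0) *
          ((1 / lam) * Real.exp (-x / lam)) * ((1 / lam) * Real.exp (-y / lam)))
      = (if a ≤ x then
          ((1 / lam) * Real.exp (-x / lam)) * Real.exp (-(max b (c - x)) / lam)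
        else 0) := by
    intro x
    by_cases hax : a ≤ x
    · set m := max b (c - x) with hm_def
      have hm0 : 0 < m := lt_of_lt_of_le hb0 (le_max_left _ _)
      have hind : ∀ y : ℝ,
          (if c ≤ x + y ∧ a ≤ x ∧ b ≤ y then (1:ℝ) else 0) *
            ((1 / lam) * Real.exp (-x / lam)) * ((1 / lam) * Real.exp (-y / lam))
          = Set.indicator (Set.Ici m)
              (fun y => ((1 / lam) * Real.exp (-x / lam)) *
                ((1 / lam) * Real.exp (-y / lam))) y := by
        intro y
        simp only [Set.indicator_apply, Set.mem_Ici]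
        by_cases h : m ≤ y
        · obtain ⟨h1, h2⟩ := max_le_iff.mp h
          rw [if_pos ⟨by linarith, hax, h1⟩, if_pos h]
          ring
        · rw [if_neg, if_neg h, zero_mul, zero_mul]
          rintro ⟨hc1, -, hb1⟩
          exact h (max_le hb1 (by linarith))
      simp_rw [hind]
      have hsub : Set.Ici m ⊆ Set.Ioi (0:ℝ) := fun y hy => lt_of_lt_of_le hm0 hy
      rw [setIntegral_indicator measurableSet_Ici, Set.inter_eq_right.mpr hsub,
        MeasureTheory.integral_Ici_eq_integral_Ioi,
        MeasureTheory.integral_const_mul, expInt lam hlam m, if_pos hax]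
    · rw [if_neg hax]
      have : ∀ y : ℝ,
          (if c ≤ x + y ∧ a ≤ x ∧ b ≤ y then (1:ℝ) else 0) *
            ((1 / lam) * Real.exp (-x / lam)) * ((1 / lam) * Real.exp (-y / lam)) = 0 := by
        intro y
        rw [if_neg (fun h => hax h.2.1), zero_mul, zero_mul]
      simp_rw [this, integral_zero]
  rw [setIntegral_congr_fun measurableSet_Ioi (fun x _ => inner x)]
  -- rewrite the outer integrand as an indicator
  set G : ℝ → ℝ := fun x =>
    ((1 / lam) * Real.exp (-x / lam)) * Real.exp (-(max b (c - x)) / lam) with hG_def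
  have hGind : ∀ x : ℝ,
      (if a ≤ x then
        ((1 / lam) * Real.exp (-x / lam)) * Real.exp (-(max b (c - x)) / lam)
       else 0) = Set.indicator (Set.Ici a) G x := by
    intro x
    simp only [Set.indicator_apply, Set.mem_Ici]
    rfl
  simp_rw [hGind]
  have hsub2 : Set.Ici a ⊆ Set.Ioi (0:ℝ) := fun x hx => lt_of_lt_of_le ha0 hx
  rw [setIntegral_indicator measurableSet_Ici, Set.inter_eq_right.mpr hsub2,
    MeasureTheory.integral_Ici_eq_integral_Ioi,
    ← Set.Ioc_union_Ioi_eq_Ioi had]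
  -- equalities of G on the two pieces
  have hEq1 : Set.EqOn (fun _ : ℝ => (1 / lam) * Real.exp (-c / lam)) G (Set.Ioc a d) := by
    intro x hx
    have hmax : max b (c - x) = c - x := max_eq_right (by
      have := hx.2; simp only [hd_def] at this; linarith)
    simp only [hG_def, hmax]
    rw [mul_assoc, ← Real.exp_add]
    congr 1
    ring
  have hEq2 : Set.EqOn (fun x : ℝ => Real.exp (-b / lam) * ((1 / lam) * Real.exp (-x / lam)))
      G (Set.Ioi d) := by
    intro x hx
    have hmax : max b (c - x) = b := max_eq_left (by
      have h := Set.mem_Ioi.mp hx; simp only [hd_def] at h; linarith)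
    simp only [hG_def, hmax]
    ring
  have hint1 : IntegrableOn G (Set.Ioc a d) :=
    ((integrableOn_const measure_Ioc_lt_top.ne).congr_fun hEq1 measurableSet_Ioc)
  have hint2 : IntegrableOn G (Set.Ioi d) := by
    have h : IntegrableOn (fun x : ℝ => Real.exp (-b / lam) * ((1 / lam) * Real.exp (-x / lam)))
        (Set.Ioi d) := (expIntegrable lam hlam d).const_mul _
    exact h.congr_fun hEq2 measurableSet_Ioi
  rw [setIntegral_union (Set.Ioc_disjoint_Ioi le_rfl) measurableSet_Ioi hint1 hint2,
    setIntegral_congr_fun measurableSet_Ioc hEq1.symm,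
    setIntegral_congr_fun measurableSet_Ioi hEq2.symm,
    MeasureTheory.setIntegral_const, MeasureTheory.integral_const_mul,
    expInt lam hlam d, Real.volume_real_Ioc_of_le had, smul_eq_mul,
    ← Real.exp_add]
  have hbd : -b / lam + -d / lam = -c / lam := by
    simp only [hd_def]; ring
  rw [hbd, hda]
  field_simp
  ring
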